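/- For λ ∈ (-1,1), the 5×5 matrix H(λ) of the discrete PT-symmetric square well (tridiagonal with diagonal 2, subdiagonal (-1+λ,-1,-1,-1-λ) reading (i+1,i) entries (−1+λ,−1,−1,−1−λ) and superdiagonal (−1−λ,−1,−1,−1+λ)) has the five real eigenvalues 2, 2±√(1-λ²), 2±√(3-λ²), all distinct. -/

import Mathlib

open Matrix Polynomial

/-- The N×N discrete PT-symmetric square-well Hamiltonian (0-indexed). -/
noncomputable def Ham (N : ℕ) (l : ℝ) : Matrix (Fin N) (Fin N) ℝ :=
  Matrix.of fun i j =>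
    if (i : ℕ) = j then 2
    else if (j : ℕ) = (i : ℕ) + 1 then
      (if (i : ℕ) = 0 then -1 - l else if (j : ℕ) = N - 1 then -1 + l else -1)
    else if (i : ℕ) = (j : ℕ) + 1 then
      (if (j : ℕ) = 0 then -1 + l else if (i : ℕ) = N - 1 then -1 - l else -1)
    else 0

lemma ham_key (l x : ℝ) : (Ham 5 l).charpoly.eval x =
    (x-2)*((x-2)^2-(1-l^2))*((x-2)^2-(3-l^2)) := by
  have h1 : (Ham 5 l).charpoly.eval x = ((charmatrix (Ham 5 l)).map (evalRingHom x)).det := by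
    rw [Matrix.charpoly, ← RingHom.mapMatrix_apply, ← RingHom.map_det]; rfl
  have h2 : ((charmatrix (Ham 5 l)).map (evalRingHom x)) =
      !![x-2, 1+l, 0,0,0; 1-l, x-2, 1, 0,0; 0,1,x-2,1,0; 0,0,1,x-2,1-l; 0,0,0,1+l,x-2] := by
    ext i j
    fin_cases i <;> fin_cases j <;>
      simp [charmatrix_apply, Ham, Matrix.one_apply, show ((3:Fin 5):ℕ)=3 from rfl,
        show ((4:Fin 5):ℕ)=4 from rfl, Matrix.vecHead, Matrix.vecTail] <;> ring
  rw [h1, h2]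
  simp [Matrix.det_succ_row_zero, Fin.sum_univ_succ, Fin.succAbove]
  ring

theorem stmt2 (l : ℝ) (hl : l ∈ Set.Ioo (-1 : ℝ) 1) :
    (∀ x ∈ [2, 2 + Real.sqrt (1 - l ^ 2), 2 - Real.sqrt (1 - l ^ 2),
            2 + Real.sqrt (3 - l ^ 2), 2 - Real.sqrt (3 - l ^ 2)],
        (Ham 5 l).charpoly.IsRoot x) ∧
    List.Pairwise (· ≠ ·)
      [2, 2 + Real.sqrt (1 - l ^ 2), 2 - Real.sqrt (1 - l ^ 2),
       2 + Real.sqrt (3 - l ^ 2), 2 - Real.sqrt (3 - l ^ 2)] := by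
  obtain ⟨hm, hp⟩ := hl
  have h1 : (0:ℝ) < 1 - l ^ 2 := by nlinarith
  have h3 : (0:ℝ) < 3 - l ^ 2 := by nlinarith
  have hs1 : Real.sqrt (1 - l ^ 2) ^ 2 = 1 - l ^ 2 := Real.sq_sqrt h1.le
  have hs3 : Real.sqrt (3 - l ^ 2) ^ 2 = 3 - l ^ 2 := Real.sq_sqrt h3.le
  have hp1 : 0 < Real.sqrt (1 - l ^ 2) := Real.sqrt_pos.mpr h1
  have hp3 : 0 < Real.sqrt (3 - l ^ 2) := Real.sqrt_pos.mpr h3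
  have h13 : Real.sqrt (1 - l ^ 2) < Real.sqrt (3 - l ^ 2) :=
    Real.sqrt_lt_sqrt h1.le (by linarith)
  constructor
  · intro x hx
    simp only [List.mem_cons, List.not_mem_nil, or_false] at hx
    rcases hx with rfl | rfl | rfl | rfl | rfl <;>
        simp only [Polynomial.IsRoot, ham_key]
    · ring
    · linear_combination (Real.sqrt (1 - l ^ 2) *
        (Real.sqrt (1 - l ^ 2) ^ 2 - (3 - l ^ 2))) * hs1
    · linear_combination (-Real.sqrt (1 - l ^ 2) *
        (Real.sqrt (1 - l ^ 2) ^ 2 - (3 - l ^ 2))) * hs1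
    · linear_combination (Real.sqrt (3 - l ^ 2) *
        (Real.sqrt (3 - l ^ 2) ^ 2 - (1 - l ^ 2))) * hs3
    · linear_combination (-Real.sqrt (3 - l ^ 2) *
        (Real.sqrt (3 - l ^ 2) ^ 2 - (1 - l ^ 2))) * hs3
  · refine List.pairwise_cons.mpr ⟨?_, List.pairwise_cons.mpr ⟨?_, List.pairwise_cons.mpr
      ⟨?_, List.pairwise_cons.mpr ⟨?_, List.pairwise_singleton _ _⟩⟩⟩⟩ <;>
        intro a ha <;>
        simp only [List.mem_cons, List.mem_singleton, List.not_mem_nil, or_false] at ha <;>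
        (first | (rcases ha with rfl | rfl | rfl | rfl) | (rcases ha with rfl | rfl | rfl) | (rcases ha with rfl | rfl) | (subst ha)) <;>
        intro h <;> nlinarith
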